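/- Let m ≥ 5 be an odd integer and let 2 ≤ j ≤ (m-1)/2. Then the ratio sin(jπ/m)/sin(π/m) is irrational. -/

import Mathlib

open Real

lemma aux_sin_le (m : ℕ) (hm5 : 5 ≤ m) (hodd : Odd m) (ℓ : ℕ) :
    Real.sin (ℓ * π / m) ≤ Real.cos (π / (2*m)) := by
  have hm0 : (m:ℝ) ≠ 0 := by positivity
  have hmpos : (0:ℝ) < m := by positivity
  have hpi := Real.pi_pos
  set t : ℤ := (m:ℤ) - 2*ℓ with ht
  have htodd : Odd t := by
    obtain ⟨c, hc⟩ := hodd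
    exact ⟨(c:ℤ) - ℓ, by push_cast [ht, hc]; ring⟩
  have h1 : (ℓ:ℝ) * π / m = π/2 - t * π / (2*m) := by
    push_cast [ht]; field_simp; ring
  rw [h1, Real.sin_pi_div_two_sub]
  set s : ℤ := t % (4*m) with hs
  have hs0 : 0 ≤ s := Int.emod_nonneg t (by positivity)
  have hs4 : s < 4*m := Int.emod_lt_of_pos t (by positivity)
  have hz : 4*(m:ℤ)*(t/(4*(m:ℤ))) + s = t := Int.mul_ediv_add_emod t (4*m)
  have hsodd : Odd s := by
    obtain ⟨c, hc⟩ := htodd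
    exact ⟨c - 2*m*(t/(4*(m:ℤ))), by linarith [hz, hc]⟩
  have h2 : Real.cos ((t:ℝ)*π/(2*m)) = Real.cos ((s:ℝ)*π/(2*m)) := by
    have hte := congrArg (fun z : ℤ => (z:ℝ)) hz
    push_cast at hte
    have h2' : (t:ℝ)*π/(2*m) = (s:ℝ)*π/(2*m) + ((t / (4*(m:ℤ)) : ℤ):ℝ)*(2*π) := by
      field_simp
      nlinarith [hte]
    rw [h2', Real.cos_add_int_mul_two_pi]
  rw [h2]
  have hs1 : 1 ≤ s := by
    rcases hsodd with ⟨c, hc⟩; omega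
  rcases le_or_gt s (2*m) with hcase | hcase
  · apply Real.cos_le_cos_of_nonneg_of_le_pi
    · positivity
    · rw [div_le_iff₀ (by positivity)]
      have hcs : (s:ℝ) ≤ 2*m := by exact_mod_cast hcase
      have := mul_le_mul_of_nonneg_right hcs hpi.le
      linarith
    · have hcs : (1:ℝ) ≤ (s:ℝ) := by exact_mod_cast hs1
      have : π ≤ (s:ℝ)*π := le_mul_of_one_le_left hpi.le hcs
      apply div_le_div_of_nonneg_right this ?_ |>.trans_eq ?_ <;> first | positivity | rfl
  · have h3 : Real.cos ((s:ℝ)*π/(2*m)) = Real.cos ((((4*(m:ℤ)) - s : ℤ):ℝ)*π/(2*m)) := by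
      rw [← Real.cos_two_pi_sub]
      congr 1
      push_cast
      field_simp
      ring
    rw [h3]
    set u : ℤ := 4*m - s with hu
    have hu1 : 1 ≤ u := by omega
    have hu2 : u ≤ 2*m := by omega
    apply Real.cos_le_cos_of_nonneg_of_le_pi
    · positivity
    · rw [div_le_iff₀ (by positivity)]
      have hcu : (u:ℝ) ≤ 2*m := by exact_mod_cast hu2
      have := mul_le_mul_of_nonneg_right hcu hpi.le
      linarith
    · have hcu : (1:ℝ) ≤ (u:ℝ) := by exact_mod_cast hu1
      have : π ≤ (u:ℝ)*π := le_mul_of_one_le_left hpi.le hcu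
      apply div_le_div_of_nonneg_right this ?_ |>.trans_eq ?_ <;> first | positivity | rfl

lemma exists_good_k (m : ℕ) (hm5 : 5 ≤ m) (hodd : Odd m) :
    ∃ k : ℕ, Nat.Coprime k (2*m) ∧ Real.sin (k * π / m) = Real.cos (π / (2*m)) := by
  have hm0 : (m:ℝ) ≠ 0 := by positivity
  have hm1 : m % 2 = 1 := Nat.odd_iff.mp hodd
  have key : ∀ k : ℕ, k % 2 = 1 → Nat.Coprime k m → Nat.Coprime k (2*m) := by
    intro k hk hcm
    exact Nat.Coprime.mul_right ((Nat.odd_iff.mpr hk).coprime_two_right) hcm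
  rcases Nat.even_or_odd ((m-1)/2) with he | ho
  · refine ⟨(m+1)/2, ?_, ?_⟩
    · set k := (m+1)/2 with hk
      have h2k : 2*k = m + 1 := by omega
      apply key
      · rcases he with ⟨c, hc⟩; omega
      · have h1 : Nat.Coprime (k-1) k := by
          have h : Nat.Coprime (k-1) ((k-1) + 1) :=
            Nat.coprime_self_add_right.mpr (Nat.coprime_one_right _)
          have e : (k-1) + 1 = k := by omega
          rwa [e] at h
        have h2 : Nat.Coprime ((k-1) + k*1) k := (Nat.coprime_add_mul_left_left _ _ _).mpr h1
        have e2 : (k-1) + k*1 = m := by omega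
        rw [e2] at h2
        exact h2.symm
    · have hk : ((((m+1)/2 : ℕ)):ℝ) = ((m:ℝ)+1)/2 := by
        have h2 : 2*((m+1)/2) = m + 1 := by omega
        have : ((2*((m+1)/2) : ℕ) : ℝ) = (m:ℝ) + 1 := by rw [h2]; push_cast; ring
        push_cast at this
        linarith
      rw [hk]
      have : ((m:ℝ)+1)/2 * π / m = π/(2*m) + π/2 := by field_simp; ring
      rw [this, Real.sin_add_pi_div_two]
  · refine ⟨(m-1)/2, ?_, ?_⟩
    · set k := (m-1)/2 with hk
      have h2k : 2*k = m - 1 := by omega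
      apply key
      · exact Nat.odd_iff.mp ho
      · have h1 : Nat.Coprime 1 k := Nat.coprime_one_left k
        have h2 : Nat.Coprime (1 + k*2) k := (Nat.coprime_add_mul_left_left _ _ _).mpr h1
        have e2 : 1 + k*2 = m := by omega
        rw [e2] at h2
        exact h2.symm
    · have hk : ((((m-1)/2 : ℕ)):ℝ) = ((m:ℝ)-1)/2 := by
        have h2 : 2*((m-1)/2) = m - 1 := by omega
        have : ((2*((m-1)/2) : ℕ) : ℝ) = (m:ℝ) - 1 := by
          rw [h2]; push_cast [Nat.cast_sub (by omega : 1 ≤ m)]; ring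
        push_cast at this
        linarith
      rw [hk]
      have : ((m:ℝ)-1)/2 * π / m = π/2 - π/(2*m) := by field_simp
      rw [this, Real.sin_pi_div_two_sub]

lemma exp_sin_key (x : ℝ) (a : ℕ) :
    Complex.exp (x * Complex.I) ^ (2*a) - 1
      = 2 * Complex.I * Complex.sin ((((a : ℝ) * x : ℝ)) : ℂ) * Complex.exp (x * Complex.I) ^ a := by
  have ha : Complex.exp (x * Complex.I) ^ a = Complex.exp ((a:ℂ) * (x * Complex.I)) :=
    (Complex.exp_nat_mul _ a).symm
  have hs : (2 : ℂ) * Complex.I * Complex.sin ((((a : ℝ) * x : ℝ)) : ℂ)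
      = Complex.exp ((a:ℂ)*(x*Complex.I)) - Complex.exp (-((a:ℂ)*(x*Complex.I))) := by
    rw [Complex.sin]
    have e1 : (-((((a : ℝ) * x : ℝ)) : ℂ)) * Complex.I = -((a:ℂ)*(x*Complex.I)) := by
      push_cast; ring
    have e2 : ((((a : ℝ) * x : ℝ)) : ℂ) * Complex.I = ((a:ℂ)*(x*Complex.I)) := by
      push_cast; ring
    rw [e1, e2]
    have : Complex.I * Complex.I = -1 := Complex.I_mul_I
    linear_combination (Complex.exp (-((a:ℂ)*(x*Complex.I))) - Complex.exp ((a:ℂ)*(x*Complex.I))) * this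
  rw [pow_mul', ha, hs, Complex.exp_neg]
  have hne := Complex.exp_ne_zero ((a:ℂ)*(x*Complex.I))
  field_simp

lemma key2 (x : ℝ) (qc : ℂ) (j : ℕ) (hj : 1 ≤ j)
    (h : Complex.sin ((((j : ℝ) * x : ℝ)) : ℂ) = qc * Complex.sin (((((1:ℕ) : ℝ) * x : ℝ)) : ℂ)) :
    Complex.exp (x*Complex.I)^(2*j) - 1
      = qc * (Complex.exp (x*Complex.I)^(j+1) - Complex.exp (x*Complex.I)^(j-1)) := by
  have E1 := exp_sin_key x j
  have E2 := exp_sin_key x 1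
  set ζ := Complex.exp (x*Complex.I) with hζ
  have E4 : ζ^(j+1) = ζ^(j-1) * ζ^2 := by rw [← pow_add]; congr 1; omega
  have E5 : ζ^j = ζ^(j-1) * ζ^1 := by rw [← pow_add]; congr 1; omega
  rw [h] at E1
  rw [E1, E4, E5]
  linear_combination (-(qc * ζ^(j-1))) * E2

lemma key3 (x : ℝ) (qc : ℂ) (j : ℕ) (hj : 1 ≤ j)
    (h : Complex.exp (x*Complex.I)^(2*j) - 1
      = qc * (Complex.exp (x*Complex.I)^(j+1) - Complex.exp (x*Complex.I)^(j-1))) :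
    Complex.sin ((((j : ℝ) * x : ℝ)) : ℂ) = qc * Complex.sin (((((1:ℕ) : ℝ) * x : ℝ)) : ℂ) := by
  have E1 := exp_sin_key x j
  have E2 := exp_sin_key x 1
  set ζ := Complex.exp (x*Complex.I) with hζ
  have E4 : ζ^(j+1) = ζ^(j-1) * ζ^2 := by rw [← pow_add]; congr 1; omega
  have E5 : ζ^j = ζ^(j-1) * ζ^1 := by rw [← pow_add]; congr 1; omega
  have hzero : (2*Complex.I*ζ^j) *
      (Complex.sin ((((j : ℝ) * x : ℝ)) : ℂ) - qc * Complex.sin (((((1:ℕ) : ℝ) * x : ℝ)) : ℂ)) = 0 := by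
    linear_combination h - E1 - (2*Complex.I*qc*Complex.sin (((((1:ℕ) : ℝ) * x : ℝ)) : ℂ))*E5
      + (qc*ζ^(j-1))*E2 - qc*E4 + (2*qc*ζ)*E5
  have hne : (2*Complex.I*ζ^j) ≠ 0 := by
    simp [Complex.I_ne_zero, Complex.exp_ne_zero, hζ]
  have := (mul_eq_zero.mp hzero).resolve_left hne
  linear_combination this

theorem quantum_dimension_irrational (m j : ℕ) (hm : 5 ≤ m) (hodd : Odd m)
    (hj2 : 2 ≤ j) (hjm : j ≤ (m - 1) / 2) :
    Irrational (Real.sin (j * π / m) / Real.sin (π / m)) := by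
  have hm0 : (m:ℝ) ≠ 0 := by positivity
  have hmpos : (0:ℝ) < m := by positivity
  have hm5 : (5:ℝ) ≤ m := by exact_mod_cast hm
  have hpi := Real.pi_pos
  by_contra hirr
  rw [Irrational] at hirr
  push_neg at hirr
  obtain ⟨q, hq⟩ := hirr
  -- basic real bounds
  have h2jm : 2*j ≤ m - 1 := by
    obtain ⟨c, hc⟩ := hodd; omega
  have hjle : (j:ℝ) ≤ ((m:ℝ)-1)/2 := by
    have : (2*j : ℕ) ≤ (m - 1 : ℕ) := h2jm
    have h1 : ((2*j : ℕ) : ℝ) ≤ ((m-1 : ℕ) : ℝ) := by exact_mod_cast this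
    push_cast [Nat.cast_sub (by omega : 1 ≤ m)] at h1
    linarith
  have hjhalf : (j:ℝ) * π / m ≤ π/2 := by
    rw [div_le_iff₀ hmpos]
    have h1 : (j:ℝ) * π ≤ (((m:ℝ)-1)/2) * π := mul_le_mul_of_nonneg_right hjle hpi.le
    nlinarith
  have hsin1 : 0 < Real.sin (π/m) := by
    apply Real.sin_pos_of_pos_of_lt_pi
    · positivity
    · apply div_lt_self hpi; linarith
  have hsinj : Real.sin (π/m) < Real.sin ((j:ℝ)*π/m) := by
    apply Real.sin_lt_sin_of_lt_of_le_pi_div_two _ hjhalf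
    · rw [div_lt_div_iff₀ hmpos hmpos]
      have : (2:ℝ) ≤ (j:ℝ) := by exact_mod_cast hj2
      nlinarith [mul_pos hpi hmpos]
    · have : (0:ℝ) < π/m := by positivity
      linarith
  have hq1 : 1 < (q:ℝ) := by
    rw [hq]
    exact (one_lt_div hsin1).mpr hsinj
  have hqs : Real.sin ((j:ℝ)*π/m) = (q:ℝ) * Real.sin (π/m) := by
    rw [hq]; field_simp
  -- complex setup
  have hqsR : Real.sin ((j:ℝ) * (π/(m:ℝ))) = (q:ℝ) * Real.sin (((1:ℕ):ℝ) * (π/(m:ℝ))) := by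
    rw [show (j:ℝ) * (π/(m:ℝ)) = (j:ℝ)*π/m by ring,
        show ((1:ℕ):ℝ) * (π/(m:ℝ)) = π/(m:ℝ) by push_cast; ring]
    exact hqs
  have hqsC : Complex.sin ((((j:ℝ) * (π/(m:ℝ)) : ℝ)) : ℂ)
      = (q:ℂ) * Complex.sin (((((1:ℕ):ℝ) * (π/(m:ℝ)) : ℝ)) : ℂ) := by
    calc Complex.sin ((((j:ℝ) * (π/(m:ℝ)) : ℝ)) : ℂ)
        = ((Real.sin ((j:ℝ) * (π/(m:ℝ))) : ℝ) : ℂ) := (Complex.ofReal_sin _).symm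
      _ = (((q:ℝ) * Real.sin (((1:ℕ):ℝ) * (π/(m:ℝ))) : ℝ) : ℂ) := by rw [hqsR]
      _ = (q:ℂ) * Complex.sin (((((1:ℕ):ℝ) * (π/(m:ℝ)) : ℝ)) : ℂ) := by
          rw [Complex.ofReal_mul, Complex.ofReal_sin, Complex.ofReal_ratCast]
  have h2 := key2 (π/(m:ℝ)) (q:ℂ) j (by omega) hqsC
  have hprim : IsPrimitiveRoot (Complex.exp (((π/(m:ℝ)) : ℝ) * Complex.I)) (2*m) := by
    have hxarg : (((π/(m:ℝ)) : ℝ) : ℂ) * Complex.I = 2*(π:ℂ)*Complex.I/((2*m : ℕ) : ℂ) := by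
      push_cast
      field_simp
    rw [hxarg]
    exact Complex.isPrimitiveRoot_exp (2*m) (by omega)
  set P : Polynomial ℚ :=
    Polynomial.X^(2*j) - Polynomial.C q * (Polynomial.X^(j+1) - Polynomial.X^(j-1)) - 1 with hP
  have haev : ∀ z : ℂ, Polynomial.aeval z P = z^(2*j) - (q:ℂ) * (z^(j+1) - z^(j-1)) - 1 := by
    intro z
    simp only [hP, map_sub, map_one, map_pow, map_mul, Polynomial.aeval_X, Polynomial.aeval_C]
    norm_num
  have hPζ : Polynomial.aeval (Complex.exp (((π/(m:ℝ)) : ℝ) * Complex.I)) P = 0 := by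
    rw [haev]
    linear_combination h2
  have hmin : Polynomial.cyclotomic (2*m) ℚ
      = minpoly ℚ (Complex.exp (((π/(m:ℝ)) : ℝ) * Complex.I)) :=
    Polynomial.cyclotomic_eq_minpoly_rat hprim (by omega)
  obtain ⟨Q, hQ⟩ := minpoly.dvd ℚ _ hPζ
  rw [← hmin] at hQ
  obtain ⟨k, hkcop, hksin⟩ := exists_good_k m hm hodd
  have hprimk : IsPrimitiveRoot ((Complex.exp (((π/(m:ℝ)) : ℝ) * Complex.I))^k) (2*m) :=
    hprim.pow_of_coprime k hkcop
  have hrootk : Polynomial.aeval ((Complex.exp (((π/(m:ℝ)) : ℝ) * Complex.I))^k)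
      (Polynomial.cyclotomic (2*m) ℚ) = 0 := by
    have h := hprimk.isRoot_cyclotomic (show 0 < 2*m by omega)
    rw [Polynomial.aeval_def, ← Polynomial.eval_map, Polynomial.map_cyclotomic]
    exact h
  have hPk : Polynomial.aeval ((Complex.exp (((π/(m:ℝ)) : ℝ) * Complex.I))^k) P = 0 := by
    rw [hQ, map_mul, hrootk, zero_mul]
  rw [haev] at hPk
  have hzk : (Complex.exp (((π/(m:ℝ)) : ℝ) * Complex.I))^k
      = Complex.exp ((((k:ℝ) * (π/(m:ℝ)) : ℝ)) * Complex.I) := by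
    rw [← Complex.exp_nat_mul]
    congr 1
    push_cast
    ring
  rw [hzk] at hPk
  have hC := key3 ((k:ℝ)*(π/(m:ℝ))) (q:ℂ) j (by omega) (by linear_combination hPk)
  have hR : Real.sin ((j:ℝ) * ((k:ℝ)*(π/(m:ℝ))))
      = (q:ℝ) * Real.sin (((1:ℕ):ℝ) * ((k:ℝ)*(π/(m:ℝ)))) := by
    have h2' : ((Real.sin ((j:ℝ) * ((k:ℝ)*(π/(m:ℝ)))) : ℝ) : ℂ)
        = (((q:ℝ) * Real.sin (((1:ℕ):ℝ) * ((k:ℝ)*(π/(m:ℝ)))) : ℝ) : ℂ) := by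
      rw [Complex.ofReal_mul, Complex.ofReal_sin, Complex.ofReal_sin, Complex.ofReal_ratCast]
      exact hC
    exact_mod_cast h2'
  have hbound := aux_sin_le m hm hodd (j*k)
  have hargs1 : ((j*k : ℕ):ℝ) * π / m = (j:ℝ) * ((k:ℝ)*(π/(m:ℝ))) := by push_cast; ring
  have hargs2 : (k:ℝ) * π / m = ((1:ℕ):ℝ) * ((k:ℝ)*(π/(m:ℝ))) := by push_cast; ring
  rw [hargs1] at hbound
  rw [hargs2] at hksin
  rw [hksin] at hR
  have hcos : 0 < Real.cos (π/(2*(m:ℝ))) := by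
    apply Real.cos_pos_of_mem_Ioo
    constructor
    · have : (0:ℝ) < π/(2*(m:ℝ)) := by positivity
      linarith
    · apply div_lt_div_of_pos_left hpi (by norm_num)
      linarith
  nlinarith [hbound, hR, hq1, hcos]
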